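/- If (a_k) and (b_k) are sequences of positive integers both tending to infinity such that a_k / b_k converges to a real number c > 0, then (log a_k!) / (log b_k!) converges to c. -/

import Mathlib

open Filter

/-- Upper bound: `log n! ≤ n log n`. -/
lemma log_factorial_le (n : ℕ) :
    Real.log (Nat.factorial n) ≤ n * Real.log n := by
  calc Real.log (Nat.factorial n) ≤ Real.log ((n : ℝ) ^ n) := by
        apply Real.log_le_log (by exact_mod_cast n.factorial_pos)
        exact_mod_cast n.factorial_le_pow
    _ = n * Real.log n := Real.log_pow n n

/-- Lower bound: `n log n - n ≤ log n!`. -/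
lemma le_log_factorial (n : ℕ) :
    n * Real.log n - n ≤ Real.log (Nat.factorial n) := by
  have h := Real.pow_div_factorial_le_exp (x := (n : ℝ)) (Nat.cast_nonneg n) n
  have hfac : (0 : ℝ) < Nat.factorial n := by exact_mod_cast n.factorial_pos
  have h2 : (n : ℝ) ^ n ≤ Nat.factorial n * Real.exp n := by
    rw [div_le_iff₀ hfac] at h; linarith [h]
  have h3 : Real.log ((n : ℝ) ^ n) ≤ Real.log (Nat.factorial n * Real.exp n) := by
    rcases Nat.eq_zero_or_pos n with rfl | hn
    · simp
    · exact Real.log_le_log (by positivity) h2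
  rw [Real.log_pow, Real.log_mul hfac.ne' (Real.exp_ne_zero n), Real.log_exp] at h3
  linarith

/-- The normalized log-factorial tends to 1. -/
lemma log_factorial_div_tendsto (a : ℕ → ℕ) (hatop : Tendsto a atTop atTop) :
    Tendsto (fun k => Real.log (Nat.factorial (a k)) / ((a k : ℝ) * Real.log (a k)))
      atTop (nhds 1) := by
  have hloga : Tendsto (fun k => Real.log (a k)) atTop atTop :=
    Real.tendsto_log_atTop.comp (tendsto_natCast_atTop_atTop.comp hatop)
  have hinv : Tendsto (fun k => (Real.log (a k))⁻¹) atTop (nhds 0) :=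
    hloga.inv_tendsto_atTop
  have hlow : Tendsto (fun k => 1 - (Real.log (a k))⁻¹) atTop (nhds 1) := by
    simpa using tendsto_const_nhds.sub hinv
  have hev : ∀ᶠ k in atTop, 3 ≤ a k := hatop.eventually_ge_atTop 3
  refine tendsto_of_tendsto_of_tendsto_of_le_of_le' hlow tendsto_const_nhds ?_ ?_
  · filter_upwards [hev] with k hk
    have h3 : (3 : ℝ) ≤ (a k : ℝ) := by exact_mod_cast hk
    have hlog : 1 < Real.log (a k) := by
      have := Real.add_one_le_exp (1 : ℝ)
      have : Real.exp 1 < (a k : ℝ) := by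
        calc Real.exp 1 < 3 := by
              have := Real.exp_one_lt_d9; linarith
          _ ≤ (a k : ℝ) := h3
      calc (1 : ℝ) = Real.log (Real.exp 1) := (Real.log_exp 1).symm
        _ < Real.log (a k) := Real.log_lt_log (Real.exp_pos 1) this
    have hpos : (0 : ℝ) < (a k : ℝ) * Real.log (a k) := by positivity
    rw [le_div_iff₀ hpos]
    have := le_log_factorial (a k)
    have heq : (1 - (Real.log (a k))⁻¹) * ((a k : ℝ) * Real.log (a k))
        = (a k : ℝ) * Real.log (a k) - a k := by
      field_simp
    rw [heq]; exact this
  · filter_upwards [hev] with k hk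
    have h3 : (3 : ℝ) ≤ (a k : ℝ) := by exact_mod_cast hk
    have hlog : 0 < Real.log (a k) := Real.log_pos (by linarith)
    have hpos : (0 : ℝ) < (a k : ℝ) * Real.log (a k) := by positivity
    rw [div_le_one hpos]
    exact log_factorial_le (a k)

/-- If `(a_k)` and `(b_k)` are sequences of positive integers tending to infinity with
`a_k / b_k → c > 0`, then `log(a_k!) / log(b_k!) → c`. -/
theorem log_factorial_ratio_tendsto
    (a b : ℕ → ℕ) (ha : ∀ k, 0 < a k) (hb : ∀ k, 0 < b k)
    (hatop : Tendsto a atTop atTop) (hbtop : Tendsto b atTop atTop)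
    (c : ℝ) (hc : 0 < c)
    (hratio : Tendsto (fun k => (a k : ℝ) / (b k : ℝ)) atTop (nhds c)) :
    Tendsto (fun k => Real.log (Nat.factorial (a k)) / Real.log (Nat.factorial (b k)))
      atTop (nhds c) := by
  have hga := log_factorial_div_tendsto a hatop
  have hgb := log_factorial_div_tendsto b hbtop
  have hlogb : Tendsto (fun k => Real.log (b k)) atTop atTop :=
    Real.tendsto_log_atTop.comp (tendsto_natCast_atTop_atTop.comp hbtop)
  have hinvlogb : Tendsto (fun k => (Real.log (b k))⁻¹) atTop (nhds 0) :=
    hlogb.inv_tendsto_atTop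
  have hlogab : Tendsto (fun k => Real.log ((a k : ℝ) / (b k : ℝ))) atTop
      (nhds (Real.log c)) :=
    ((Real.continuousAt_log hc.ne').tendsto.comp hratio)
  -- log a / log b → 1
  have hquot : Tendsto (fun k => Real.log (a k) / Real.log (b k)) atTop (nhds 1) := by
    have key : Tendsto (fun k => Real.log ((a k : ℝ) / (b k : ℝ)) * (Real.log (b k))⁻¹ + 1)
        atTop (nhds 1) := by
      have := hlogab.mul hinvlogb
      simpa using this.add (tendsto_const_nhds (x := (1:ℝ)))
    refine key.congr' ?_
    filter_upwards [hatop.eventually_ge_atTop 2, hbtop.eventually_ge_atTop 2] with k hka hkb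
    have hap : (0 : ℝ) < (a k : ℝ) := by exact_mod_cast (ha k)
    have hbp : (0 : ℝ) < (b k : ℝ) := by exact_mod_cast (hb k)
    have hlogbk : 0 < Real.log (b k) := Real.log_pos (by exact_mod_cast hkb)
    rw [Real.log_div hap.ne' hbp.ne']
    field_simp
    ring
  -- main combination
  have hmain : Tendsto (fun k =>
      ((a k : ℝ) / (b k : ℝ)) * (Real.log (a k) / Real.log (b k)) *
        (Real.log (Nat.factorial (a k)) / ((a k : ℝ) * Real.log (a k))) /
        (Real.log (Nat.factorial (b k)) / ((b k : ℝ) * Real.log (b k))))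
      atTop (nhds c) := by
    have := ((hratio.mul hquot).mul hga).div hgb one_ne_zero
    simpa only [mul_one, div_one, Pi.div_def] using this
  refine hmain.congr' ?_
  filter_upwards [hatop.eventually_ge_atTop 3, hbtop.eventually_ge_atTop 3] with k hka hkb
  have hap : (1 : ℝ) < (a k : ℝ) := by exact_mod_cast lt_of_lt_of_le (by norm_num) hka
  have hbp : (1 : ℝ) < (b k : ℝ) := by exact_mod_cast lt_of_lt_of_le (by norm_num) hkb
  have hlogak : 0 < Real.log (a k) := Real.log_pos hap
  have hlogbk : 0 < Real.log (b k) := Real.log_pos hbp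
  have hfb : (1 : ℝ) < (Nat.factorial (b k) : ℝ) := by
    exact_mod_cast Nat.one_lt_factorial.mpr (lt_of_lt_of_le (by norm_num) hkb)
  have hlogfb : 0 < Real.log (Nat.factorial (b k)) := Real.log_pos hfb
  field_simp
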